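/- Let A, Z be binary random variables and U, W random variables on a finite probability space with all relevant conditioning events having positive probability. Suppose (i) U is conditionally independent of Z given W, and (ii) there is a function δ of W alone such that E[A | U, W, Z=1] − E[A | U, W, Z=0] = δ(W) almost surely. Then E[A | W, Z=1] − E[A | W, Z=0] = δ(W) almost surely. -/
import Mathlib

open Finset
open scoped Classical BigOperators

noncomputable section

variable {Ω : Type}

/-- Expectation of `f` under pmf `p` on a finite sample space. -/
def E [Fintype Ω] (p f : Ω → ℝ) : ℝ := ∑ ω, p ω * f ω

/-- Probability of the event `s` under pmf `p`. -/
def Pr [Fintype Ω] (p : Ω → ℝ) (s : Ω → Prop) : ℝ := ∑ ω, if s ω then p ω else 0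

/-- Conditional expectation of `f` given the event `s`. -/
def CE [Fintype Ω] (p f : Ω → ℝ) (s : Ω → Prop) : ℝ :=
  (∑ ω, if s ω then p ω * f ω else 0) / Pr p s

/-- The realized instrument propensity P(Z = Z(ω) | W = W(ω)). -/
def PZ {β : Type} [Fintype Ω] (p : Ω → ℝ) (W : Ω → β) (Z : Ω → ℝ) (ω : Ω) : ℝ :=
  Pr p (fun ω' => W ω' = W ω ∧ Z ω' = Z ω) / Pr p (fun ω' => W ω' = W ω)

/-- The sign (−1)^{1−X(ω)} for a {0,1}-valued variable X. -/
def sgn (X : Ω → ℝ) (ω : Ω) : ℝ := if X ω = 1 then 1 else -1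

/-- Auxiliary: the unnormalized conditional sum (numerator of `CE`). -/
def SA [Fintype Ω] (p f : Ω → ℝ) (s : Ω → Prop) : ℝ :=
  ∑ ω, if s ω then p ω * f ω else 0

lemma CE_eq [Fintype Ω] (p f : Ω → ℝ) (s : Ω → Prop) :
    CE p f s = SA p f s / Pr p s := rfl

lemma Pr_congr [Fintype Ω] (p : Ω → ℝ) {s t : Ω → Prop} (h : ∀ ω, s ω ↔ t ω) :
    Pr p s = Pr p t :=
  Finset.sum_congr rfl fun ω _ => by simp [h ω]

lemma Pr_nonneg [Fintype Ω] {p : Ω → ℝ} (hp0 : ∀ ω, 0 ≤ p ω) (s : Ω → Prop) :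
    0 ≤ Pr p s :=
  Finset.sum_nonneg fun ω _ => by by_cases hs : s ω <;> simp [hs, hp0 ω]

lemma fiber_Pr {γ : Type} [Fintype Ω] (p : Ω → ℝ) (c : Ω → Prop) (U : Ω → γ) :
    ∑ u ∈ Finset.univ.image U, Pr p (fun ω => U ω = u ∧ c ω) = Pr p c := by
  simp only [Pr]
  rw [Finset.sum_comm]
  refine Finset.sum_congr rfl fun ω _ => ?_
  by_cases hc : c ω
  · simp only [hc, and_true]
    rw [Finset.sum_ite_eq]
    simp [Finset.mem_image_of_mem]
  · simp [hc]

lemma fiber_SA {γ : Type} [Fintype Ω] (p f : Ω → ℝ) (c : Ω → Prop) (U : Ω → γ) :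
    ∑ u ∈ Finset.univ.image U, SA p f (fun ω => U ω = u ∧ c ω) = SA p f c := by
  simp only [SA]
  rw [Finset.sum_comm]
  refine Finset.sum_congr rfl fun ω _ => ?_
  by_cases hc : c ω
  · simp only [hc, and_true]
    rw [Finset.sum_ite_eq]
    simp [Finset.mem_image_of_mem]
  · simp [hc]

lemma exists_pos_of_Pr_pos [Fintype Ω] {p : Ω → ℝ} (hp0 : ∀ ω, 0 ≤ p ω)
    {s : Ω → Prop} (h : 0 < Pr p s) : ∃ ω, s ω ∧ 0 < p ω := by
  by_contra hcon
  push_neg at hcon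
  have hz : Pr p s = 0 := Finset.sum_eq_zero fun ω _ => by
    by_cases hs : s ω
    · have := le_antisymm (hcon ω hs) (hp0 ω)
      simp [hs, this]
    · simp [hs]
  rw [hz] at h; exact lt_irrefl 0 h

lemma pr_zero_imp [Fintype Ω] {p : Ω → ℝ} (hp0 : ∀ ω, 0 ≤ p ω) {s : Ω → Prop}
    (h : Pr p s = 0) : ∀ ω, s ω → p ω = 0 := by
  intro ω hs
  have hnn : ∀ i ∈ Finset.univ, (0:ℝ) ≤ if s i then p i else 0 := by
    intro i _; by_cases hi : s i <;> simp [hi, hp0 i]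
  have := (Finset.sum_eq_zero_iff_of_nonneg hnn).mp h ω (Finset.mem_univ ω)
  simpa [hs] using this

lemma SA_zero [Fintype Ω] {p : Ω → ℝ} (hp0 : ∀ ω, 0 ≤ p ω) (f : Ω → ℝ)
    {s t : Ω → Prop} (hst : ∀ ω, t ω → s ω) (h : Pr p s = 0) : SA p f t = 0 := by
  refine Finset.sum_eq_zero fun ω _ => ?_
  by_cases ht : t ω
  · have := pr_zero_imp hp0 h ω (hst ω ht)
    simp [ht, this]
  · simp [ht]

/-- Point-exposure case of Lemma 1: under IV independence (U ⫫ Z | W) and independent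
compliance type, δ(W) is identified from (A, Z, W). -/
theorem stmt0 {β γ : Type} [Fintype Ω]
    (p : Ω → ℝ) (hp0 : ∀ ω, 0 ≤ p ω) (hp1 : ∑ ω, p ω = 1)
    (A Z : Ω → ℝ) (U : Ω → γ) (W : Ω → β)
    (hA : ∀ ω, A ω = 0 ∨ A ω = 1) (hZ : ∀ ω, Z ω = 0 ∨ Z ω = 1)
    -- all relevant conditioning events have positive probability
    (hposW : ∀ ω, 0 < p ω → 0 < Pr p (fun ω' => W ω' = W ω))
    (hposWZ : ∀ ω, 0 < p ω → ∀ z : ℝ, z = 0 ∨ z = 1 →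
      0 < Pr p (fun ω' => W ω' = W ω ∧ Z ω' = z))
    (hposUWZ : ∀ ω, 0 < p ω → ∀ z : ℝ, z = 0 ∨ z = 1 →
      0 < Pr p (fun ω' => U ω' = U ω ∧ W ω' = W ω ∧ Z ω' = z))
    -- (i) U ⫫ Z | W
    (hUZ : ∀ (u : γ) (z : ℝ) (w : β),
      Pr p (fun ω => U ω = u ∧ Z ω = z ∧ W ω = w) * Pr p (fun ω => W ω = w)
        = Pr p (fun ω => U ω = u ∧ W ω = w) * Pr p (fun ω => Z ω = z ∧ W ω = w))
    -- (ii) independent compliance type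
    (δ : β → ℝ)
    (hδ : ∀ ω, 0 < p ω →
      CE p A (fun ω' => U ω' = U ω ∧ W ω' = W ω ∧ Z ω' = 1)
        - CE p A (fun ω' => U ω' = U ω ∧ W ω' = W ω ∧ Z ω' = 0) = δ (W ω)) :
    ∀ ω, 0 < p ω →
      CE p A (fun ω' => W ω' = W ω ∧ Z ω' = 1)
        - CE p A (fun ω' => W ω' = W ω ∧ Z ω' = 0) = δ (W ω) := by
  intro ω₀ hω₀
  have hPw : 0 < Pr p (fun ω' => W ω' = W ω₀) := hposW ω₀ hω₀
  have hP1 : 0 < Pr p (fun ω' => W ω' = W ω₀ ∧ Z ω' = 1) := hposWZ ω₀ hω₀ 1 (Or.inr rfl)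
  have hP0 : 0 < Pr p (fun ω' => W ω' = W ω₀ ∧ Z ω' = 0) := hposWZ ω₀ hω₀ 0 (Or.inl rfl)
  -- per-fiber identity
  have key : ∀ u ∈ Finset.univ.image U,
      SA p A (fun ω => U ω = u ∧ (fun ω' => W ω' = W ω₀ ∧ Z ω' = 1) ω)
          / Pr p (fun ω' => W ω' = W ω₀ ∧ Z ω' = 1)
        - SA p A (fun ω => U ω = u ∧ (fun ω' => W ω' = W ω₀ ∧ Z ω' = 0) ω)
          / Pr p (fun ω' => W ω' = W ω₀ ∧ Z ω' = 0)
      = δ (W ω₀) * (Pr p (fun ω => U ω = u ∧ (fun ω' => W ω' = W ω₀) ω)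
          / Pr p (fun ω' => W ω' = W ω₀)) := by
    intro u _
    simp only []
    by_cases hPu : 0 < Pr p (fun ω => U ω = u ∧ W ω = W ω₀)
    · obtain ⟨ω₁, ⟨hU1, hW1⟩, hp₁⟩ := exists_pos_of_Pr_pos hp0 hPu
      have hδ' := hδ ω₁ hp₁
      rw [hU1, hW1, CE_eq, CE_eq] at hδ'
      have hQ1 := hposUWZ ω₁ hp₁ 1 (Or.inr rfl)
      have hQ0 := hposUWZ ω₁ hp₁ 0 (Or.inl rfl)
      rw [hU1, hW1] at hQ1 hQ0
      have hind : ∀ z : ℝ,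
          Pr p (fun ω' => U ω' = u ∧ W ω' = W ω₀ ∧ Z ω' = z) * Pr p (fun ω' => W ω' = W ω₀)
            = Pr p (fun ω => U ω = u ∧ W ω = W ω₀)
                * Pr p (fun ω' => W ω' = W ω₀ ∧ Z ω' = z) := by
        intro z
        have h := hUZ u z (W ω₀)
        have e1 : Pr p (fun ω => U ω = u ∧ Z ω = z ∧ W ω = W ω₀)
            = Pr p (fun ω' => U ω' = u ∧ W ω' = W ω₀ ∧ Z ω' = z) :=
          Pr_congr p (fun ω => by tauto)
        have e2 : Pr p (fun ω => Z ω = z ∧ W ω = W ω₀)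
            = Pr p (fun ω' => W ω' = W ω₀ ∧ Z ω' = z) :=
          Pr_congr p (fun ω => by tauto)
        rw [e1, e2] at h
        exact h
      set Pw := Pr p (fun ω' => W ω' = W ω₀) with hPwdef
      set P1 := Pr p (fun ω' => W ω' = W ω₀ ∧ Z ω' = 1) with hP1def
      set P0 := Pr p (fun ω' => W ω' = W ω₀ ∧ Z ω' = 0) with hP0def
      set Pu := Pr p (fun ω => U ω = u ∧ W ω = W ω₀) with hPudef
      set q1 := Pr p (fun ω' => U ω' = u ∧ W ω' = W ω₀ ∧ Z ω' = 1) with hq1def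
      set q0 := Pr p (fun ω' => U ω' = u ∧ W ω' = W ω₀ ∧ Z ω' = 0) with hq0def
      set s1 := SA p A (fun ω' => U ω' = u ∧ W ω' = W ω₀ ∧ Z ω' = 1) with hs1def
      set s0 := SA p A (fun ω' => U ω' = u ∧ W ω' = W ω₀ ∧ Z ω' = 0) with hs0def
      rw [← hδ']
      field_simp
      linear_combination (s1 * P0 * q0) * hind 1 - (P1 * s0 * q1) * hind 0
    · have hPu0 : Pr p (fun ω => U ω = u ∧ W ω = W ω₀) = 0 :=
        le_antisymm (not_lt.mp hPu) (Pr_nonneg hp0 _)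
      have hz1 : SA p A (fun ω' => U ω' = u ∧ W ω' = W ω₀ ∧ Z ω' = 1) = 0 :=
        SA_zero hp0 A (fun ω h => ⟨h.1, h.2.1⟩) hPu0
      have hz0 : SA p A (fun ω' => U ω' = u ∧ W ω' = W ω₀ ∧ Z ω' = 0) = 0 :=
        SA_zero hp0 A (fun ω h => ⟨h.1, h.2.1⟩) hPu0
      rw [hz1, hz0, hPu0]
      simp
  have decompS1 := fiber_SA p A (fun ω' => W ω' = W ω₀ ∧ Z ω' = 1) U
  have decompS0 := fiber_SA p A (fun ω' => W ω' = W ω₀ ∧ Z ω' = 0) U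
  have decompP := fiber_Pr p (fun ω' => W ω' = W ω₀) U
  rw [CE_eq, CE_eq, ← decompS1, ← decompS0, Finset.sum_div, Finset.sum_div,
    ← Finset.sum_sub_distrib, Finset.sum_congr rfl key, ← Finset.mul_sum,
    ← Finset.sum_div, decompP, div_self hPw.ne', mul_one]
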